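/- For every infinite cardinal κ, u(ω) ≤ u(κ), where u denotes the ultrafilter number function. -/
import Mathlib


open Cardinal Set

universe u v

/-- An ultrafilter is uniform if all of its members have full cardinality. -/
def Uniform {α : Type u} (U : Ultrafilter α) : Prop := ∀ X ∈ U, #X = #α

/-- An ultrafilter `U` over `S` is `l`-decomposable if there is `f : S → l`
such that preimages of sets of size `< l` are not in `U`. -/
def Decomposable {S : Type u} (U : Ultrafilter S) (l : Cardinal.{v}) : Prop :=
  ∃ f : S → l.out, ∀ X : Set l.out, #X < l → f ⁻¹' X ∉ U

/-- The character of an ultrafilter: the least cardinality of a base. -/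
noncomputable def charU {α : Type u} (U : Ultrafilter α) : Cardinal.{u} :=
  sInf {c | ∃ B : Set (Set α), #B = c ∧ (∀ X ∈ B, X ∈ U) ∧ ∀ Y ∈ U, ∃ X ∈ B, X ⊆ Y}

/-- The ultrafilter number at a cardinal `κ`: the minimal character of a
uniform ultrafilter over (a set of size) `κ`. -/
noncomputable def uNumber (κ : Cardinal.{u}) : Cardinal.{u} :=
  sInf {c | ∃ U : Ultrafilter κ.out, Uniform U ∧ charU U = c}

lemma aux_infinite_out {c : Cardinal.{u}} (hc : ℵ₀ ≤ c) : Infinite c.out := by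
  rw [Cardinal.infinite_iff, Cardinal.mk_out]; exact hc
noncomputable def cosmall (α : Type u) [Infinite α] : Filter α where
  sets := {X | #↥(Xᶜ) < #α}
  univ_sets := by
    simp only [mem_setOf_eq, compl_univ, mk_eq_zero]
    exact pos_iff_ne_zero.mpr (mk_ne_zero α)
  sets_of_superset := fun hX hXY =>
    lt_of_le_of_lt (mk_le_mk_of_subset (compl_subset_compl.mpr hXY)) hX
  inter_sets := by
    intro X Y hX hY
    simp only [mem_setOf_eq, compl_inter]
    exact lt_of_le_of_lt (mk_union_le _ _)
      (Cardinal.add_lt_of_lt (Cardinal.infinite_iff.mp inferInstance) hX hY)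
lemma cosmall_neBot (α : Type u) [Infinite α] : (cosmall α).NeBot := by
  refine Filter.forall_mem_nonempty_iff_neBot.mp ?_
  intro s hs
  rw [nonempty_iff_ne_empty]
  rintro rfl
  have : #↥((∅ : Set α)ᶜ) < #α := hs
  rw [compl_empty, mk_univ] at this
  exact lt_irrefl _ this
lemma exists_uniform (α : Type u) [Infinite α] : ∃ U : Ultrafilter α, Uniform U := by
  have := cosmall_neBot α
  obtain ⟨U, hU⟩ := Ultrafilter.exists_le (cosmall α)
  refine ⟨U, fun X hX => ?_⟩
  refine le_antisymm (mk_set_le X) ?_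
  by_contra h2
  rw [not_le] at h2
  have hc : Xᶜ ∈ cosmall α := by
    show #↥(Xᶜᶜ) < #α
    rwa [compl_compl]
  exact (Ultrafilter.compl_mem_iff_notMem.mp (hU hc)) hX
lemma charU_le {α : Type u} (U : Ultrafilter α) (B : Set (Set α)) (h1 : ∀ X ∈ B, X ∈ U)
    (h2 : ∀ Y ∈ U, ∃ X ∈ B, X ⊆ Y) : charU U ≤ #B :=
  csInf_le' ⟨B, rfl, h1, h2⟩
lemma charU_attained {α : Type u} (U : Ultrafilter α) :
    ∃ B : Set (Set α), #B = charU U ∧ (∀ X ∈ B, X ∈ U) ∧ ∀ Y ∈ U, ∃ X ∈ B, X ⊆ Y := by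
  have hne : {c | ∃ B : Set (Set α), #B = c ∧ (∀ X ∈ B, X ∈ U) ∧
      ∀ Y ∈ U, ∃ X ∈ B, X ⊆ Y}.Nonempty :=
    ⟨#{X | X ∈ U}, {X | X ∈ U}, rfl, fun X hX => hX, fun Y hY => ⟨Y, hY, subset_rfl⟩⟩
  exact csInf_mem hne
lemma charU_ge {α : Type u} [Infinite α] (U : Ultrafilter α) (hU : Uniform U) :
    #α ≤ charU U := by
  by_contra hlt
  rw [not_le] at hlt
  obtain ⟨B, hBcard, hB1, hB2⟩ := charU_attained U
  have hne : ∀ X : B, (X : Set α).Nonempty := fun X =>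
    Ultrafilter.nonempty_of_mem (hB1 X X.2)
  choose g hg using hne
  have hS : #↥(range g) < #α := lt_of_le_of_lt (mk_range_le) (hBcard ▸ hlt)
  have hSnot : range g ∉ U := fun hmem => absurd (hU _ hmem) hS.ne
  have hSc : (range g)ᶜ ∈ U := Ultrafilter.compl_mem_iff_notMem.mpr hSnot
  obtain ⟨X, hX, hsub⟩ := hB2 _ hSc
  exact hsub (hg ⟨X, hX⟩) ⟨⟨X, hX⟩, rfl⟩
lemma sigma_complete {α : Type u} (U : Ultrafilter α)
    (h : ∀ g : α → ℕ, ∃ n, g ⁻¹' {n} ∈ U) (X : ℕ → Set α) (hX : ∀ n, X n ∈ U) :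
    (⋂ n, X n) ∈ U := by
  classical
  by_contra hD
  have hDc : (⋂ n, X n)ᶜ ∈ U := Ultrafilter.compl_mem_iff_notMem.mpr hD
  obtain ⟨n, hn⟩ := h (fun a => if h : ∃ m, a ∉ X m then Nat.find h else 0)
  have hmem : (fun a => if h : ∃ m, a ∉ X m then Nat.find h else 0) ⁻¹' {n}
      ∩ (⋂ n, X n)ᶜ ∈ U := Filter.inter_mem hn hDc
  have hsub : (fun a => if h : ∃ m, a ∉ X m then Nat.find h else 0) ⁻¹' {n}
      ∩ (⋂ n, X n)ᶜ ⊆ (X n)ᶜ := by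
    rintro a ⟨ha1, ha2⟩
    have hex : ∃ m, a ∉ X m := by simpa [mem_iInter] using ha2
    have hga : Nat.find hex = n := by simpa [hex] using ha1
    exact hga ▸ Nat.find_spec hex
  have hXnc : (X n)ᶜ ∈ U := Filter.mem_of_superset hmem hsub
  exact (Ultrafilter.compl_mem_iff_notMem.mp hXnc) (hX n)
lemma cont_lemma {α : Type u} [Infinite α] (U : Ultrafilter α) (hU : Uniform U)
    (h : ∀ g : α → ℕ, ∃ n, g ⁻¹' {n} ∈ U) : (2 : Cardinal.{u}) ^ (ℵ₀ : Cardinal.{u}) < #α := by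
  classical
  refine not_le.mp fun hle => ?_
  have h2 : #α ≤ #(Set (ULift.{u} ℕ)) := by rwa [mk_set, mk_uLift, mk_nat, lift_aleph0]
  obtain ⟨f⟩ := Cardinal.le_def _ _ |>.mp h2
  set X : ℕ → Set α := fun n =>
    if {a | ULift.up n ∈ f a} ∈ U then {a | ULift.up n ∈ f a} else {a | ULift.up n ∈ f a}ᶜ
    with hXdef
  have hXU : ∀ n, X n ∈ U := by
    intro n
    rw [hXdef]
    dsimp only
    split_ifs with hn
    · exact hn
    · exact Ultrafilter.compl_mem_iff_notMem.mpr hn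
  have hD := sigma_complete U h X hXU
  have hconst : ∀ a ∈ ⋂ n, X n, f a = {u : ULift.{u} ℕ | {b | ULift.up u.down ∈ f b} ∈ U} := by
    intro a ha
    ext u
    have haX : a ∈ X u.down := mem_iInter.mp ha u.down
    rw [hXdef] at haX
    dsimp only at haX
    by_cases hn : {b | ULift.up u.down ∈ f b} ∈ U
    · rw [if_pos hn] at haX
      have : ULift.up u.down ∈ f a := haX
      simpa [hn] using this
    · rw [if_neg hn] at haX
      have : ULift.up u.down ∉ f a := haX
      simpa [hn] using this
  have hinf : Infinite ↥(⋂ n, X n) := by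
    rw [Cardinal.infinite_iff, hU _ hD]
    exact Cardinal.infinite_iff.mp inferInstance
  obtain ⟨a, b, hab⟩ := exists_pair_ne ↥(⋂ n, X n)
  have : (a : α) = b := f.injective ((hconst a a.2).trans (hconst b b.2).symm)
  exact hab (Subtype.ext this)

/-- `u(ω) ≤ u(κ)` for every infinite cardinal `κ`. -/
theorem stmt8 (κ : Cardinal.{u}) (hκ : ℵ₀ ≤ κ) : uNumber ℵ₀ ≤ uNumber κ := by
  haveI hIκ : Infinite κ.out := aux_infinite_out hκ
  haveI hIω : Infinite (ℵ₀ : Cardinal.{u}).out := aux_infinite_out le_rfl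
  obtain ⟨U0, hU0⟩ := exists_uniform κ.out
  have hne : {c | ∃ U : Ultrafilter κ.out, Uniform U ∧ charU U = c}.Nonempty :=
    ⟨charU U0, U0, hU0, rfl⟩
  obtain ⟨U, hUuni, hUchar⟩ : ∃ U : Ultrafilter κ.out, Uniform U ∧ charU U = uNumber κ :=
    csInf_mem hne
  by_cases h : ∃ f : κ.out → (ℵ₀ : Cardinal.{u}).out, ∀ n, f ⁻¹' {n} ∉ U
  · -- ω-decomposable case: push forward
    obtain ⟨f, hf⟩ := h
    have hVuni : Uniform (U.map f) := by
      intro X hX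
      refine le_antisymm (mk_set_le X) ?_
      by_contra h2
      rw [not_le, mk_out] at h2
      have hXfin : X.Finite := by rwa [lt_aleph0_iff_set_finite] at h2
      have hpre : f ⁻¹' X ∈ U := hX
      have heq : f ⁻¹' X = ⋃ n ∈ X, f ⁻¹' {n} := by
        ext a; simp
      rw [heq] at hpre
      obtain ⟨n, _, hn⟩ := (Ultrafilter.finite_biUnion_mem_iff hXfin).mp hpre
      exact hf n hn
    obtain ⟨B, hBcard, hB1, hB2⟩ := charU_attained U
    have hcharle : charU (U.map f) ≤ charU U := by
      have step : charU (U.map f) ≤ #↥((fun X => f '' X) '' B) := by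
        refine charU_le _ _ ?_ ?_
        · rintro _ ⟨X, hX, rfl⟩
          show f '' X ∈ U.map f
          exact Ultrafilter.mem_map.mpr
            (Filter.mem_of_superset (hB1 X hX) (subset_preimage_image f X))
        · intro Y hY
          obtain ⟨X, hX, hXY⟩ := hB2 _ hY
          exact ⟨f '' X, ⟨X, hX, rfl⟩, image_subset_iff.mpr hXY⟩
      exact step.trans (mk_image_le.trans_eq hBcard)
    have h1 : uNumber ℵ₀ ≤ charU (U.map f) := csInf_le' ⟨U.map f, hVuni, rfl⟩
    exact h1.trans (hcharle.trans_eq hUchar)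
  · -- σ-complete case
    push_neg at h
    haveI : Countable (ℵ₀ : Cardinal.{u}).out := by
      rw [← Cardinal.mk_le_aleph0_iff, mk_out]
    obtain ⟨dd⟩ := (nonempty_denumerable_iff (α := (ℵ₀ : Cardinal.{u}).out)).mpr ⟨inferInstance, inferInstance⟩
    have e : (ℵ₀ : Cardinal.{u}).out ≃ ℕ := @Denumerable.eqv _ dd
    have hσ : ∀ g : κ.out → ℕ, ∃ n : ℕ, g ⁻¹' {n} ∈ U := by
      intro g
      obtain ⟨m, hm⟩ := h (fun a => e.symm (g a))
      refine ⟨e m, ?_⟩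
      have : (fun a => e.symm (g a)) ⁻¹' {m} = g ⁻¹' {e m} := by
        ext a
        simp [Equiv.symm_apply_eq]
      rwa [this] at hm
    have hbig : (2 : Cardinal.{u}) ^ (ℵ₀ : Cardinal.{u}) < κ := by
      rw [← mk_out κ]; exact cont_lemma U hUuni hσ
    obtain ⟨V0, hV0⟩ := exists_uniform (ℵ₀ : Cardinal.{u}).out
    have h1 : uNumber ℵ₀ ≤ charU V0 := csInf_le' ⟨V0, hV0, rfl⟩
    have h2 : charU V0 ≤ (2 : Cardinal.{u}) ^ (ℵ₀ : Cardinal.{u}) := by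
      have hb := charU_le V0 {X | X ∈ V0} (fun X hX => hX) (fun Y hY => ⟨Y, hY, subset_rfl⟩)
      refine hb.trans ?_
      calc #↥{X | X ∈ V0} ≤ #(Set (ℵ₀ : Cardinal.{u}).out) := mk_set_le _
        _ = 2 ^ (ℵ₀ : Cardinal.{u}) := by rw [mk_set, mk_out]
    have h3 : κ ≤ charU U := le_trans (le_of_eq (mk_out κ).symm) (charU_ge U hUuni)
    exact h1.trans (h2.trans (hbig.le.trans (h3.trans_eq hUchar)))
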